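/- For every fixed ρ > 0 there is a constant C > 0 such that for all σ ∈ (0,1): | ∫_{B_ρ^{N-1}} 𝒦_s((y',0), σ) dy' − σ^{−1/(2s)} ∫_{ℝ^{N-1}} P_s((y',0)) dy' | ≤ C σ. -/

import Mathlib

open MeasureTheory Metric Real Set

noncomputable section

open Pointwise

/-- Append a last coordinate: `(y', a) ∈ ℝ^{N-1} × ℝ ↦ ℝ^N`. -/
def snocPt {d : ℕ} (y' : EuclideanSpace ℝ (Fin d)) (a : ℝ) :
    EuclideanSpace ℝ (Fin (d + 1)) :=
  (EuclideanSpace.equiv (Fin (d + 1)) ℝ).symm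
    (Fin.snoc ((EuclideanSpace.equiv (Fin d) ℝ) y') a)

/-- The last standard basis vector `e_N` of `ℝ^N`. -/
def eN (d : ℕ) : EuclideanSpace ℝ (Fin (d + 1)) :=
  EuclideanSpace.single (Fin.last d) 1

/-- `τ_E = 𝟙_E − 𝟙_{ℝ^N ∖ cl E}`. -/
def tauE {d : ℕ} (E : Set (EuclideanSpace ℝ (Fin (d + 1))))
    (y : EuclideanSpace ℝ (Fin (d + 1))) : ℝ :=
  Set.indicator E (fun _ => 1) y - Set.indicator (closure E)ᶜ (fun _ => 1) y

/-- The kernel `𝒦_s(x,t) = t^{-N/(2s)} P_s(t^{-1/(2s)} x)` with `N = d+1`. -/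
def ker {d : ℕ} (s : ℝ) (P : EuclideanSpace ℝ (Fin (d + 1)) → ℝ)
    (x : EuclideanSpace ℝ (Fin (d + 1))) (t : ℝ) : ℝ :=
  t ^ (-(((d : ℝ) + 1) / (2 * s))) * P ((t ^ (-(1 : ℝ) / (2 * s))) • x)

/-- `u(x,t) = ∫_{ℝ^N} 𝒦_s(x−y,t) τ_E(y) dy`. -/
def uF {d : ℕ} (s : ℝ) (P : EuclideanSpace ℝ (Fin (d + 1)) → ℝ)
    (E : Set (EuclideanSpace ℝ (Fin (d + 1)))) (x : EuclideanSpace ℝ (Fin (d + 1)))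
    (t : ℝ) : ℝ :=
  ∫ y, ker s P (x - y) t * tauE E y


lemma snocPt_apply {d : ℕ} (y' : EuclideanSpace ℝ (Fin d)) (a : ℝ) (i : Fin (d+1)) :
    snocPt y' a i = Fin.snoc (α := fun _ => ℝ) (fun j => y' j) a i := rfl

lemma snocPt_smul {d : ℕ} (r : ℝ) (y' : EuclideanSpace ℝ (Fin d)) :
    snocPt (r • y') 0 = r • snocPt y' 0 := by
  ext i
  rw [PiLp.smul_apply, snocPt_apply, snocPt_apply]
  induction i using Fin.lastCases with
  | last => simp [Fin.snoc_last]
  | cast j => simp [Fin.snoc_castSucc]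

lemma snocPt_sub {d : ℕ} (x y : EuclideanSpace ℝ (Fin d)) :
    snocPt x 0 - snocPt y 0 = snocPt (x - y) 0 := by
  ext i
  rw [PiLp.sub_apply, snocPt_apply, snocPt_apply, snocPt_apply]
  induction i using Fin.lastCases with
  | last => simp [Fin.snoc_last]
  | cast j => simp [Fin.snoc_castSucc]

lemma norm_snocPt {d : ℕ} (y' : EuclideanSpace ℝ (Fin d)) :
    ‖snocPt y' 0‖ = ‖y'‖ := by
  rw [EuclideanSpace.norm_eq, EuclideanSpace.norm_eq]
  congr 1
  rw [Fin.sum_univ_castSucc]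
  simp [snocPt_apply, Fin.snoc_castSucc, Fin.snoc_last]

lemma continuous_snocPt {d : ℕ} : Continuous (fun y' : EuclideanSpace ℝ (Fin d) => snocPt y' 0) := by
  have : Isometry (fun y' : EuclideanSpace ℝ (Fin d) => snocPt y' 0) := by
    apply Isometry.of_dist_eq
    intro x y
    rw [dist_eq_norm, dist_eq_norm, snocPt_sub, norm_snocPt]
  exact this.continuous



section aux
variable {d : ℕ}

lemma aux_one_add_rpow {p t : ℝ} (hp : 0 ≤ p) (ht : 0 ≤ t) :
    (1 + t) ^ p ≤ 2 ^ p * (1 + t ^ p) := by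
  rcases le_total t 1 with h | h
  · have h1 : (1 + t) ^ p ≤ (2:ℝ) ^ p := Real.rpow_le_rpow (by linarith) (by linarith) hp
    have h2 : (0:ℝ) ≤ t ^ p := Real.rpow_nonneg ht p
    nlinarith [Real.rpow_nonneg (show (0:ℝ) ≤ 2 by norm_num) p]
  · have h1 : (1 + t) ^ p ≤ (2 * t) ^ p := Real.rpow_le_rpow (by linarith) (by linarith) hp
    rw [Real.mul_rpow (by norm_num) ht] at h1
    have h2 : (2:ℝ) ^ p * t ^ p ≤ 2 ^ p * (1 + t ^ p) := by
      have := Real.rpow_nonneg (show (0:ℝ) ≤ 2 by norm_num) p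
      nlinarith
    linarith

lemma aux_integrable {p : ℝ} (hdp : (d : ℝ) < p) (hp : 0 ≤ p)
    (f : EuclideanSpace ℝ (Fin d) → ℝ) (hf : Continuous f) (𝒞 : ℝ) (h𝒞 : 0 ≤ 𝒞)
    (hb : ∀ x, |f x| ≤ 𝒞 / (1 + ‖x‖ ^ p)) : Integrable f := by
  have hfin : (Module.finrank ℝ (EuclideanSpace ℝ (Fin d)) : ℝ) < p := by
    rw [finrank_euclideanSpace_fin]; exact hdp
  refine ((integrable_one_add_norm hfin).const_mul (𝒞 * 2 ^ p)).mono'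
    hf.aestronglyMeasurable (Filter.Eventually.of_forall fun x => ?_)
  have ht : (0:ℝ) ≤ ‖x‖ := norm_nonneg x
  have h1 : (0:ℝ) < 1 + ‖x‖ ^ p := by positivity
  have h2 : (0:ℝ) < 1 + ‖x‖ := by positivity
  have key := aux_one_add_rpow hp ht
  calc ‖f x‖ = |f x| := rfl
    _ ≤ 𝒞 / (1 + ‖x‖ ^ p) := hb x
    _ ≤ 𝒞 * 2 ^ p * (1 + ‖x‖) ^ (-p) := by
        rw [Real.rpow_neg h2.le, div_eq_mul_inv]
        have h3 : (0:ℝ) < (1 + ‖x‖) ^ p := Real.rpow_pos_of_pos h2 p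
        rw [mul_assoc]
        apply mul_le_mul_of_nonneg_left _ h𝒞
        have h3 : (0:ℝ) < (1 + ‖x‖) ^ p := Real.rpow_pos_of_pos h2 p
        rw [← div_eq_mul_inv, le_div_iff₀ h3, inv_mul_le_iff₀ h1]
        nlinarith [Real.rpow_nonneg ht p]
end aux

section aux2
variable {d : ℕ}

lemma aux_integrableOn {p r : ℝ} (hdp : (d : ℝ) < p) (hp : 0 ≤ p) (hr : 0 < r) :
    IntegrableOn (fun z : EuclideanSpace ℝ (Fin d) => ‖z‖ ^ (-p))
      (ball (0 : EuclideanSpace ℝ (Fin d)) r)ᶜ := by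
  have hfin : (Module.finrank ℝ (EuclideanSpace ℝ (Fin d)) : ℝ) < p := by
    rw [finrank_euclideanSpace_fin]; exact hdp
  have hmeas : MeasurableSet (ball (0 : EuclideanSpace ℝ (Fin d)) r)ᶜ :=
    measurableSet_ball.compl
  refine (((integrable_one_add_norm hfin).const_mul ((1 + 1/r) ^ p)).restrict).mono'
    (ContinuousOn.aestronglyMeasurable ?_ measurableSet_ball.compl) ?_
  · refine ContinuousOn.rpow_const (continuous_norm.continuousOn) fun z hz => Or.inl ?_
    have hz' : r ≤ ‖z‖ := by simpa [mem_ball, dist_zero_right, not_lt] using hz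
    have : (0:ℝ) < ‖z‖ := lt_of_lt_of_le hr hz'
    exact ne_of_gt this
  rw [ae_restrict_iff' hmeas]
  refine Filter.Eventually.of_forall fun z hz => ?_
  have hz' : r ≤ ‖z‖ := by
    simpa [mem_ball, dist_zero_right, not_lt] using hz
  have hz0 : (0:ℝ) < ‖z‖ := lt_of_lt_of_le hr hz'
  have h1 : 1 + ‖z‖ ≤ (1 + 1/r) * ‖z‖ := by
    have : 1 ≤ ‖z‖ / r := (one_le_div hr).2 hz'
    have h2 : ‖z‖ / r = (1/r) * ‖z‖ := by ring
    nlinarith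
  have key : (1 + ‖z‖) ^ p ≤ ((1 + 1/r)) ^ p * ‖z‖ ^ p := by
    rw [← Real.mul_rpow (by positivity) hz0.le]
    exact Real.rpow_le_rpow (by positivity) h1 hp
  have hZp : (0:ℝ) < ‖z‖ ^ p := Real.rpow_pos_of_pos hz0 p
  have hT : (0:ℝ) < (1 + ‖z‖) ^ p := Real.rpow_pos_of_pos (by positivity) p
  rw [Real.norm_eq_abs, abs_of_nonneg (Real.rpow_nonneg hz0.le _), Real.rpow_neg hz0.le,
    Real.rpow_neg (by positivity : (0:ℝ) ≤ 1 + ‖z‖)]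
  rw [← div_eq_mul_inv, le_div_iff₀ hT, inv_mul_le_iff₀ hZp]
  calc (1 + ‖z‖) ^ p ≤ (1 + 1/r) ^ p * ‖z‖ ^ p := key
    _ = ‖z‖ ^ p * (1 + 1/r) ^ p := by ring

/-- Scaling identity for the tail integral of `‖z‖^(-p)`. -/
lemma aux_tail_scaling {p R : ℝ} (hR : 0 < R) :
    ∫ z in (ball (0 : EuclideanSpace ℝ (Fin d)) R)ᶜ, ‖z‖ ^ (-p) =
      (R:ℝ) ^ (d:ℕ) * (R ^ (-p) *
        ∫ z in (ball (0 : EuclideanSpace ℝ (Fin d)) 1)ᶜ, ‖z‖ ^ (-p)) := by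
  have hset : R • (ball (0 : EuclideanSpace ℝ (Fin d)) 1)ᶜ = (ball 0 R)ᶜ := by
    ext z
    rw [Set.mem_smul_set_iff_inv_smul_mem₀ hR.ne', Set.mem_compl_iff, Set.mem_compl_iff,
      mem_ball_zero_iff, mem_ball_zero_iff, norm_smul, norm_inv, Real.norm_eq_abs,
      abs_of_pos hR, not_iff_not, inv_mul_lt_iff₀ hR, mul_one]
  have h := MeasureTheory.Measure.setIntegral_comp_smul_of_pos (volume)
    (fun z : EuclideanSpace ℝ (Fin d) => ‖z‖ ^ (-p)) (ball (0:EuclideanSpace ℝ (Fin d)) 1)ᶜ hR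
  rw [hset, finrank_euclideanSpace_fin] at h
  have h2 : ∀ z : EuclideanSpace ℝ (Fin d), ‖R • z‖ ^ (-p) = R ^ (-p) * ‖z‖ ^ (-p) := by
    intro z
    rw [norm_smul, Real.norm_eq_abs, abs_of_pos hR, Real.mul_rpow hR.le (norm_nonneg z)]
  simp only [h2] at h
  rw [integral_const_mul] at h
  rw [smul_eq_mul] at h
  have hRd : (0:ℝ) < R ^ (d:ℕ) := by positivity
  field_simp at h ⊢
  linarith [h]
end aux2

noncomputable section


/-- for each fixed `ρ > 0`,
`|∫_{B_ρ^{N-1}} 𝒦_s((y',0),σ) dy' − σ^{−1/(2s)} ∫_{ℝ^{N-1}} P_s((y',0)) dy'| ≤ C σ`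
for all `σ ∈ (0,1)`. -/
theorem stmt8
    (d : ℕ) (hd : 1 ≤ d) (s : ℝ) (hs : s ∈ Set.Ioo (0 : ℝ) 1)
    (P : EuclideanSpace ℝ (Fin (d + 1)) → ℝ)
    (hPrad : ∀ x y, ‖x‖ = ‖y‖ → P x = P y)
    (hP1 : ContDiff ℝ 1 P)
    (𝒞 : ℝ) (h𝒞 : 1 ≤ 𝒞)
    (hPlow : ∀ y, 𝒞⁻¹ / (1 + ‖y‖ ^ ((d : ℝ) + 1 + 2 * s)) ≤ P y)
    (hPup : ∀ y, P y ≤ 𝒞 / (1 + ‖y‖ ^ ((d : ℝ) + 1 + 2 * s))) :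
    ∀ ρ > (0 : ℝ), ∃ C > (0 : ℝ), ∀ σ ∈ Set.Ioo (0 : ℝ) 1,
      |(∫ y' in ball (0 : EuclideanSpace ℝ (Fin d)) ρ, ker s P (snocPt y' 0) σ) -
          σ ^ (-(1 / (2 * s))) * ∫ y' : EuclideanSpace ℝ (Fin d), P (snocPt y' 0)| ≤
        C * σ := by
  obtain ⟨hs0, hs1⟩ := hs
  intro ρ hρ
  set p : ℝ := (d : ℝ) + 1 + 2 * s with hp_def
  have hp0 : (0:ℝ) ≤ p := by positivity
  have hdp : (d : ℝ) < p := by rw [hp_def]; linarith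
  have h𝒞0 : (0:ℝ) < 𝒞 := lt_of_lt_of_le one_pos h𝒞
  have hP'cont : Continuous (fun z : EuclideanSpace ℝ (Fin d) => P (snocPt z 0)) :=
    hP1.continuous.comp continuous_snocPt
  have hP'nonneg : ∀ z : EuclideanSpace ℝ (Fin d), 0 ≤ P (snocPt z 0) := fun z =>
    le_trans (by positivity) (hPlow _)
  have hP'bound : ∀ z : EuclideanSpace ℝ (Fin d), |P (snocPt z 0)| ≤ 𝒞 / (1 + ‖z‖ ^ p) := by
    intro z
    rw [abs_of_nonneg (hP'nonneg z)]
    have := hPup (snocPt z 0)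
    rwa [norm_snocPt] at this
  have hint : Integrable (fun z : EuclideanSpace ℝ (Fin d) => P (snocPt z 0)) :=
    aux_integrable hdp hp0 _ hP'cont 𝒞 h𝒞0.le hP'bound
  set J1 : ℝ := ∫ z in (ball (0 : EuclideanSpace ℝ (Fin d)) 1)ᶜ, ‖z‖ ^ (-p) with hJ1
  have hJ1nonneg : 0 ≤ J1 :=
    setIntegral_nonneg measurableSet_ball.compl fun z _ => Real.rpow_nonneg (norm_nonneg z) _
  refine ⟨𝒞 * ρ ^ ((d:ℝ) - p) * J1 + 1, by positivity, ?_⟩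
  rintro σ ⟨hσ0, hσ1⟩
  set c : ℝ := σ ^ (-(1:ℝ)/(2*s)) with hc
  have hcpos : 0 < c := Real.rpow_pos_of_pos hσ0 _
  set R : ℝ := c * ρ with hRdef
  have hRpos : 0 < R := mul_pos hcpos hρ
  have h2s : (2:ℝ) * s ≠ 0 := by positivity
  -- step 1
  have e1 : ∀ y' : EuclideanSpace ℝ (Fin d),
      ker s P (snocPt y' 0) σ = σ ^ (-(((d:ℝ)+1)/(2*s))) * P (snocPt (c • y') 0) := by
    intro y'
    rw [ker, snocPt_smul, hc]
  have step1 : (∫ y' in ball (0 : EuclideanSpace ℝ (Fin d)) ρ, ker s P (snocPt y' 0) σ)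
      = c * ∫ z in ball (0 : EuclideanSpace ℝ (Fin d)) R, P (snocPt z 0) := by
    calc (∫ y' in ball (0 : EuclideanSpace ℝ (Fin d)) ρ, ker s P (snocPt y' 0) σ)
        = ∫ y' in ball (0 : EuclideanSpace ℝ (Fin d)) ρ,
            σ ^ (-(((d:ℝ)+1)/(2*s))) * P (snocPt (c • y') 0) := by simp_rw [e1]
      _ = σ ^ (-(((d:ℝ)+1)/(2*s))) *
            ∫ y' in ball (0 : EuclideanSpace ℝ (Fin d)) ρ, P (snocPt (c • y') 0) :=
          integral_const_mul _ _
      _ = σ ^ (-(((d:ℝ)+1)/(2*s))) * ((c ^ (d:ℕ))⁻¹ *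
            ∫ z in c • ball (0 : EuclideanSpace ℝ (Fin d)) ρ, P (snocPt z 0)) := by
          rw [MeasureTheory.Measure.setIntegral_comp_smul_of_pos volume
            (fun z : EuclideanSpace ℝ (Fin d) => P (snocPt z 0)) _ hcpos,
            finrank_euclideanSpace_fin, smul_eq_mul]
      _ = σ ^ (-(((d:ℝ)+1)/(2*s))) * ((c ^ (d:ℕ))⁻¹ *
            ∫ z in ball (0 : EuclideanSpace ℝ (Fin d)) R, P (snocPt z 0)) := by
          rw [_root_.smul_ball hcpos.ne', smul_zero, Real.norm_eq_abs, abs_of_pos hcpos]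
      _ = c * ∫ z in ball (0 : EuclideanSpace ℝ (Fin d)) R, P (snocPt z 0) := by
          rw [← mul_assoc]
          congr 1
          rw [hc, ← Real.rpow_natCast (σ ^ (-(1:ℝ)/(2*s))) d, ← Real.rpow_mul hσ0.le,
            ← Real.rpow_neg hσ0.le, ← Real.rpow_add hσ0]
          congr 1
          field_simp
          ring
  have hce : σ ^ (-(1/(2*s))) = c := by rw [hc]; congr 1; ring
  have step2 : (∫ z : EuclideanSpace ℝ (Fin d), P (snocPt z 0))
      = (∫ z in ball (0 : EuclideanSpace ℝ (Fin d)) R, P (snocPt z 0))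
        + ∫ z in (ball (0 : EuclideanSpace ℝ (Fin d)) R)ᶜ, P (snocPt z 0) :=
    (integral_add_compl measurableSet_ball hint).symm
  have htailnonneg : 0 ≤ ∫ z in (ball (0 : EuclideanSpace ℝ (Fin d)) R)ᶜ, P (snocPt z 0) :=
    setIntegral_nonneg measurableSet_ball.compl fun z _ => hP'nonneg z
  have htail : (∫ z in (ball (0 : EuclideanSpace ℝ (Fin d)) R)ᶜ, P (snocPt z 0))
      ≤ 𝒞 * (R ^ (d:ℕ) * (R ^ (-p) * J1)) := by
    have hmono : (∫ z in (ball (0 : EuclideanSpace ℝ (Fin d)) R)ᶜ, P (snocPt z 0))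
        ≤ ∫ z in (ball (0 : EuclideanSpace ℝ (Fin d)) R)ᶜ, 𝒞 * ‖z‖ ^ (-p) := by
      refine setIntegral_mono_on hint.integrableOn
        ((aux_integrableOn hdp hp0 hRpos).const_mul 𝒞) measurableSet_ball.compl ?_
      intro z hz
      have hz' : R ≤ ‖z‖ := by simpa [mem_ball, dist_zero_right, not_lt] using hz
      have hz0 : (0:ℝ) < ‖z‖ := lt_of_lt_of_le hRpos hz'
      have hzp : (0:ℝ) < ‖z‖ ^ p := Real.rpow_pos_of_pos hz0 p
      calc P (snocPt z 0) ≤ 𝒞 / (1 + ‖z‖ ^ p) := by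
            have := hPup (snocPt z 0); rwa [norm_snocPt] at this
        _ ≤ 𝒞 * ‖z‖ ^ (-p) := by
            rw [Real.rpow_neg hz0.le, ← div_eq_mul_inv]
            gcongr
            linarith
    calc (∫ z in (ball (0 : EuclideanSpace ℝ (Fin d)) R)ᶜ, P (snocPt z 0))
        ≤ ∫ z in (ball (0 : EuclideanSpace ℝ (Fin d)) R)ᶜ, 𝒞 * ‖z‖ ^ (-p) := hmono
      _ = 𝒞 * ∫ z in (ball (0 : EuclideanSpace ℝ (Fin d)) R)ᶜ, ‖z‖ ^ (-p) :=
          integral_const_mul _ _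
      _ = 𝒞 * (R ^ (d:ℕ) * (R ^ (-p) * J1)) := by rw [aux_tail_scaling hRpos, ← hJ1]
  have key : (∫ y' in ball (0 : EuclideanSpace ℝ (Fin d)) ρ, ker s P (snocPt y' 0) σ) -
      σ ^ (-(1/(2*s))) * (∫ z : EuclideanSpace ℝ (Fin d), P (snocPt z 0))
      = -(c * ∫ z in (ball (0 : EuclideanSpace ℝ (Fin d)) R)ᶜ, P (snocPt z 0)) := by
    rw [step1, hce, step2]
    ring
  rw [key, abs_neg, abs_of_nonneg (mul_nonneg hcpos.le htailnonneg)]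
  have halg : c * (𝒞 * (R ^ (d:ℕ) * (R ^ (-p) * J1))) = 𝒞 * ρ ^ ((d:ℝ) - p) * J1 * σ := by
    have e1 : R ^ (d:ℕ) = c ^ ((d:ℝ)) * ρ ^ ((d:ℝ)) := by
      rw [hRdef, mul_pow, ← Real.rpow_natCast c, ← Real.rpow_natCast ρ]
    have e2 : R ^ (-p) = c ^ (-p) * ρ ^ (-p) := by
      rw [hRdef, Real.mul_rpow hcpos.le hρ.le]
    have e3 : c * c ^ ((d:ℝ)) * c ^ (-p) = σ := by
      nth_rewrite 1 [show c = c ^ (1:ℝ) by rw [Real.rpow_one]]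
      rw [← Real.rpow_add hcpos, ← Real.rpow_add hcpos, hc, ← Real.rpow_mul hσ0.le]
      rw [show (-(1:ℝ)/(2*s)) * (1 + (d:ℝ) + -p) = 1 by rw [hp_def]; field_simp; ring]
      exact Real.rpow_one σ
    have e4 : ρ ^ ((d:ℝ)) * ρ ^ (-p) = ρ ^ ((d:ℝ) - p) := by
      rw [← Real.rpow_add hρ]; ring_nf
    calc c * (𝒞 * (R ^ (d:ℕ) * (R ^ (-p) * J1)))
        = 𝒞 * (ρ ^ ((d:ℝ)) * ρ ^ (-p)) * J1 * (c * c ^ ((d:ℝ)) * c ^ (-p)) := by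
          rw [e1, e2]; ring
      _ = 𝒞 * ρ ^ ((d:ℝ) - p) * J1 * σ := by rw [e3, e4]
  calc c * ∫ z in (ball (0 : EuclideanSpace ℝ (Fin d)) R)ᶜ, P (snocPt z 0)
      ≤ c * (𝒞 * (R ^ (d:ℕ) * (R ^ (-p) * J1))) := by
        exact mul_le_mul_of_nonneg_left htail hcpos.le
    _ = 𝒞 * ρ ^ ((d:ℝ) - p) * J1 * σ := halg
    _ ≤ (𝒞 * ρ ^ ((d:ℝ) - p) * J1 + 1) * σ := by nlinarith
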